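/- Let k ≥ 1 be an integer and set m := 2^k. Then there exists a nonzero odd integer a ∈ ℤ such that a/m ∈ 𝔉 and every HCF partial quotient of a/m has absolute value at most 8; that is, for every n ≥ 0 with T^n(a/m) ≠ 0 one has |[1/T^n(a/m)]| ≤ 8. -/

import Mathlib

open Complex

/-- The nearest Gaussian integer to a complex number, as a complex number. -/
noncomputable def nearestGaussian (z : ℂ) : ℂ :=
  (⌊z.re + 1 / 2⌋ : ℤ) + (⌊z.im + 1 / 2⌋ : ℤ) * I

/-- The fundamental domain `𝔉 = {z : [z] = 0}`. -/
noncomputable def Fdom : Set ℂ := {z : ℂ | nearestGaussian z = 0}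

/-- The complex Gauss map on the fundamental domain. -/
noncomputable def gaussT (z : ℂ) : ℂ :=
  if z = 0 then 0 else z⁻¹ - nearestGaussian z⁻¹

/- ### Auxiliary real-valued lemmas -/

lemma floor_zero_of_bounds {y : ℝ} (h1 : -(1/2) ≤ y) (h2 : y < 1/2) : ⌊y + 1/2⌋ = 0 := by
  rw [Int.floor_eq_zero_iff]
  constructor
  · show (0:ℝ) ≤ y + 1/2; linarith
  · show y + 1/2 < 1; linarith

lemma ng_real (r : ℝ) : nearestGaussian (r : ℂ) = ((⌊r + 1 / 2⌋ : ℤ) : ℂ) := by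
  unfold nearestGaussian
  simp only [Complex.ofReal_re, Complex.ofReal_im]
  rw [show ⌊(0:ℝ) + 1/2⌋ = 0 from floor_zero_of_bounds (by norm_num) (by norm_num)]
  simp

/-- `GoodR x` : the real number `x` is in the fundamental domain and its whole
HCF orbit has partial quotients of absolute value at most 8. -/
def GoodR (x : ℝ) : Prop :=
  (-(1/2) ≤ x ∧ x < 1/2) ∧
  ∀ n : ℕ, gaussT^[n] (x : ℂ) ≠ 0 →
    ‖nearestGaussian (gaussT^[n] (x : ℂ))⁻¹‖ ≤ 8

lemma gaussT_zero : gaussT 0 = 0 := by simp [gaussT]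

lemma goodR_zero : GoodR 0 := by
  refine ⟨⟨by norm_num, by norm_num⟩, ?_⟩
  intro n hn
  exfalso
  apply hn
  push_cast
  exact Function.iterate_fixed gaussT_zero n

lemma goodR_step (y : ℝ) (b : ℤ) (hy : GoodR y) (hb : |b| ≤ 8)
    (hcond : 2 < (b : ℝ) + y ∨ (b : ℝ) + y ≤ -2) :
    GoodR (((b : ℝ) + y)⁻¹) := by
  obtain ⟨⟨hy1, hy2⟩, horb⟩ := hy
  set z : ℝ := (b : ℝ) + y with hz
  have hz0 : z ≠ 0 := by rcases hcond with h | h <;> intro h0 <;> rw [h0] at h <;> linarith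
  have hmul : z * z⁻¹ = 1 := mul_inv_cancel₀ hz0
  have hbounds : -(1/2) ≤ z⁻¹ ∧ z⁻¹ < 1/2 := by
    rcases hcond with h | h
    · have hzpos : 0 < z := by linarith
      have hinvpos : 0 < z⁻¹ := inv_pos.mpr hzpos
      exact ⟨by linarith, by nlinarith⟩
    · have hzneg : z < 0 := by linarith
      have hinvneg : z⁻¹ < 0 := inv_lt_zero.mpr hzneg
      exact ⟨by nlinarith, by linarith⟩
  have hxne : ((z⁻¹ : ℝ) : ℂ) ≠ 0 := by
    simpa using inv_ne_zero hz0
  have hxinv : (((z⁻¹ : ℝ) : ℂ))⁻¹ = ((z : ℝ) : ℂ) := by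
    push_cast
    rw [inv_inv]
  have hfloor : ⌊z + 1/2⌋ = b := by
    have h : z + 1/2 = (b : ℝ) + (y + 1/2) := by rw [hz]; ring
    rw [h, Int.floor_intCast_add, floor_zero_of_bounds hy1 hy2, add_zero]
  have hng : nearestGaussian ((z : ℝ) : ℂ) = ((b : ℤ) : ℂ) := by
    rw [ng_real, hfloor]
  have hgT : gaussT ((z⁻¹ : ℝ) : ℂ) = ((y : ℝ) : ℂ) := by
    rw [gaussT, if_neg hxne, hxinv, hng]
    rw [hz]
    push_cast
    ring
  refine ⟨hbounds, ?_⟩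
  intro n
  cases n with
  | zero =>
    intro _
    simp only [Function.iterate_zero, id_eq]
    rw [hxinv, hng, Complex.norm_intCast]
    have h8 : |(b:ℝ)| ≤ 8 := by exact_mod_cast hb
    exact h8
  | succ n =>
    intro hn
    rw [Function.iterate_succ_apply, hgT] at hn ⊢
    exact horb n hn

/- ### Continued fraction words -/

/-- Value of a word of partial quotients, outermost digit first. -/
noncomputable def valCF : List ℤ → ℝ
  | [] => 0
  | x :: l => ((x : ℝ) + valCF l)⁻¹

/-- Numerator/denominator pair of a word. -/
def ndCF : List ℤ → ℤ × ℤ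
  | [] => (0, 1)
  | x :: l => ((ndCF l).2, (ndCF l).1 + x * (ndCF l).2)

/-- Admissible digit words. -/
def Dok : List ℤ → Prop
  | [] => True
  | x :: l => Dok l ∧ x.natAbs ≤ 8 ∧
      (3 ≤ x.natAbs ∨ (x = 2 ∧ 0 < valCF l) ∨ (x = -2 ∧ valCF l ≤ 0))

lemma dok_good : ∀ l : List ℤ, Dok l →
    GoodR (valCF l) ∧ (valCF l = ((ndCF l).1 : ℝ) / ((ndCF l).2 : ℝ)) ∧ (ndCF l).2 ≠ 0 := by
  intro l
  induction l with
  | nil =>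
    intro _
    refine ⟨goodR_zero, by norm_num [valCF, ndCF], by norm_num [ndCF]⟩
  | cons x l ih =>
    rintro ⟨hD, hle, hx⟩
    obtain ⟨hG, hval, hdne⟩ := ih hD
    obtain ⟨⟨hy1, hy2⟩, _⟩ := hG
    set y := valCF l with hy
    have hb : |x| ≤ 8 := by rw [Int.abs_eq_natAbs]; omega
    have hcond : 2 < (x : ℝ) + y ∨ (x : ℝ) + y ≤ -2 := by
      rcases hx with h3 | ⟨h2, hpos⟩ | ⟨h2, hneg⟩
      · have h : 3 ≤ x ∨ x ≤ -3 := by omega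
        rcases h with h | h
        · left
          have hh : (3:ℝ) ≤ (x:ℝ) := by exact_mod_cast h
          linarith
        · right
          have hh : (x:ℝ) ≤ -3 := by exact_mod_cast h
          linarith
      · left; rw [h2]; push_cast; linarith
      · right; rw [h2]; push_cast; linarith
    have hstep := goodR_step y x (ih hD).1 hb hcond
    have hzne : (x : ℝ) + y ≠ 0 := by
      rcases hcond with h | h <;> intro h0 <;> rw [h0] at h <;> linarith
    have hd2 : ((ndCF l).2 : ℝ) ≠ 0 := by exact_mod_cast hdne
    have hnum : (((ndCF l).1 + x * (ndCF l).2 : ℤ) : ℝ)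
        = ((ndCF l).2 : ℝ) * ((x : ℝ) + y) := by
      push_cast
      rw [hval]
      field_simp
      ring
    refine ⟨hstep, ?_, ?_⟩
    · show ((x : ℝ) + y)⁻¹ = (((ndCF l).2 : ℝ)) / (((ndCF l).1 + x * (ndCF l).2 : ℤ) : ℝ)
      rw [hnum, eq_div_iff (mul_ne_zero hd2 hzne)]
      field_simp
    · show ((ndCF l).1 + x * (ndCF l).2 : ℤ) ≠ 0
      intro h0
      rw [h0] at hnum
      push_cast at hnum
      exact (mul_ne_zero hd2 hzne) hnum.symm

/- ### Matrix algebra for words -/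

@[ext] structure M2 where
  a : ℤ
  b : ℤ
  c : ℤ
  d : ℤ

def M2.mul (M N : M2) : M2 :=
  ⟨M.a * N.a + M.b * N.c, M.a * N.b + M.b * N.d,
   M.c * N.a + M.d * N.c, M.c * N.b + M.d * N.d⟩

lemma M2.mul_assoc (A B C : M2) : (A.mul B).mul C = A.mul (B.mul C) := by
  ext <;> simp [M2.mul] <;> ring

def Fm : List ℤ → M2
  | [] => ⟨1, 0, 0, 1⟩
  | x :: l => M2.mul ⟨0, 1, 1, x⟩ (Fm l)

lemma Fm_append (l₁ l₂ : List ℤ) : Fm (l₁ ++ l₂) = (Fm l₁).mul (Fm l₂) := by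
  induction l₁ with
  | nil =>
    show Fm l₂ = M2.mul ⟨1,0,0,1⟩ (Fm l₂)
    ext <;> simp [M2.mul]
  | cons x l ih =>
    show Fm (x :: (l ++ l₂)) = (M2.mul ⟨0,1,1,x⟩ (Fm l)).mul (Fm l₂)
    rw [M2.mul_assoc]
    show M2.mul ⟨0,1,1,x⟩ (Fm (l ++ l₂)) = _
    rw [ih]

lemma ndCF_eq (l : List ℤ) : ndCF l = ((Fm l).b, (Fm l).d) := by
  induction l with
  | nil => simp [ndCF, Fm]
  | cons x l ih =>
    show ((ndCF l).2, (ndCF l).1 + x * (ndCF l).2) = _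
    rw [ih]
    show _ = ((M2.mul ⟨0,1,1,x⟩ (Fm l)).b, (M2.mul ⟨0,1,1,x⟩ (Fm l)).d)
    simp only [M2.mul, Prod.mk.injEq]
    constructor <;> ring

def nr (l : List ℤ) : List ℤ := (l.map (fun x => -x)).reverse

lemma nr_cons (x : ℤ) (l : List ℤ) : nr (x :: l) = nr l ++ [-x] := by
  simp [nr]

lemma Fm_nr (l : List ℤ) :
    Fm (nr l) = ⟨(-1) ^ l.length * (Fm l).a, -(-1) ^ l.length * (Fm l).c,
                 -(-1) ^ l.length * (Fm l).b, (-1) ^ l.length * (Fm l).d⟩ := by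
  induction l with
  | nil => simp [nr, Fm]
  | cons x l ih =>
    rw [nr_cons, Fm_append, ih]
    have h1 : Fm [-x] = ⟨0, 1, 1, -x⟩ := by
      show M2.mul ⟨0,1,1,-x⟩ ⟨1,0,0,1⟩ = _
      ext <;> simp [M2.mul]
    rw [h1]
    show _ = (⟨(-1)^(l.length+1) * (Fm (x::l)).a, -(-1)^(l.length+1) * (Fm (x::l)).c,
              -(-1)^(l.length+1) * (Fm (x::l)).b, (-1)^(l.length+1) * (Fm (x::l)).d⟩ : M2)
    show _ = (⟨(-1)^(l.length+1) * (M2.mul ⟨0,1,1,x⟩ (Fm l)).a,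
              -(-1)^(l.length+1) * (M2.mul ⟨0,1,1,x⟩ (Fm l)).c,
              -(-1)^(l.length+1) * (M2.mul ⟨0,1,1,x⟩ (Fm l)).b,
              (-1)^(l.length+1) * (M2.mul ⟨0,1,1,x⟩ (Fm l)).d⟩ : M2)
    ext <;> simp [M2.mul, pow_succ] <;> ring

lemma det_Fm (l : List ℤ) :
    (Fm l).a * (Fm l).d - (Fm l).b * (Fm l).c = (-1) ^ l.length := by
  induction l with
  | nil => simp [Fm]
  | cons x l ih =>
    show (M2.mul ⟨0,1,1,x⟩ (Fm l)).a * (M2.mul ⟨0,1,1,x⟩ (Fm l)).d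
        - (M2.mul ⟨0,1,1,x⟩ (Fm l)).b * (M2.mul ⟨0,1,1,x⟩ (Fm l)).c = (-1) ^ (l.length + 1)
    simp only [M2.mul, pow_succ]
    linear_combination (-1 : ℤ) * ih

lemma fold_d (l : List ℤ) (t : ℤ) :
    (ndCF (nr l ++ t :: l)).2 = (-1) ^ l.length * t * ((ndCF l).2) ^ 2 := by
  rw [ndCF_eq, ndCF_eq, Fm_append, Fm_nr]
  show (M2.mul _ (M2.mul ⟨0,1,1,t⟩ (Fm l))).d = _
  simp only [M2.mul]
  ring

/- ### Words with digits of absolute value in [3,8] -/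

def Sok (l : List ℤ) : Prop := ∀ x ∈ l, 3 ≤ x.natAbs ∧ x.natAbs ≤ 8

lemma sok_dok : ∀ l : List ℤ, Sok l → Dok l := by
  intro l
  induction l with
  | nil => intro _; trivial
  | cons x l ih =>
    intro h
    have hx := h x (by simp)
    exact ⟨ih (fun y hy => h y (by simp [hy])), hx.2, Or.inl hx.1⟩

def Wok (k : ℕ) : Prop :=
  ∃ l : List ℤ, Sok l ∧ ((ndCF l).2 = 2 ^ k ∨ (ndCF l).2 = -(2 ^ k))

lemma wok_fold (j : ℕ) (h : Wok j) (c : ℕ) (hc : c = 2 ∨ c = 3) : Wok (2 * j + c) := by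
  obtain ⟨l, hS, hd⟩ := h
  refine ⟨nr l ++ (2 ^ c : ℤ) :: l, ?_, ?_⟩
  · intro x hx
    rw [List.mem_append, List.mem_cons] at hx
    rcases hx with hx | hx | hx
    · rw [nr, List.mem_reverse, List.mem_map] at hx
      obtain ⟨y, hy, rfl⟩ := hx
      have := hS y hy
      simpa using this
    · subst hx
      rcases hc with rfl | rfl <;> norm_num
    · exact hS x hx
  · rw [fold_d]
    have hsq : ((ndCF l).2) ^ 2 = 2 ^ (2 * j) := by
      rcases hd with hd | hd <;> rw [hd] <;> ring
    rw [hsq]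
    rcases neg_one_pow_eq_or ℤ l.length with hs | hs <;> rw [hs]
    · left; rw [pow_add]; ring
    · right; rw [pow_add]; ring

lemma wok2 : Wok 2 := by
  refine ⟨[4], by intro x hx; fin_cases hx <;> constructor <;> decide, Or.inl ?_⟩
  norm_num [ndCF]

lemma wok3 : Wok 3 := by
  refine ⟨[8], by intro x hx; fin_cases hx <;> constructor <;> decide, Or.inl ?_⟩
  norm_num [ndCF]

lemma wok4 : Wok 4 := by
  refine ⟨[3, 5], by intro x hx; fin_cases hx <;> constructor <;> decide, Or.inl ?_⟩
  norm_num [ndCF]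

lemma wok12 : Wok 12 := by
  refine ⟨[-8, -6, 3, 4, -7], by intro x hx; fin_cases hx <;> constructor <;> decide, Or.inr ?_⟩
  norm_num [ndCF]

lemma wok13 : Wok 13 := by
  refine ⟨[-8, 7, -7, -4, -5], by intro x hx; fin_cases hx <;> constructor <;> decide, Or.inl ?_⟩
  norm_num [ndCF]

lemma wok_all : ∀ k : ℕ, 2 ≤ k → k ≠ 5 → Wok k := by
  intro k
  induction k using Nat.strong_induction_on with
  | _ k ih =>
    intro hk h5
    by_cases h14 : k < 14
    · interval_cases k
      · exact wok2
      · exact wok3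
      · exact wok4
      · omega
      · simpa using wok_fold 2 wok2 2 (Or.inl rfl)
      · simpa using wok_fold 2 wok2 3 (Or.inr rfl)
      · simpa using wok_fold 3 wok3 2 (Or.inl rfl)
      · simpa using wok_fold 3 wok3 3 (Or.inr rfl)
      · simpa using wok_fold 4 wok4 2 (Or.inl rfl)
      · simpa using wok_fold 4 wok4 3 (Or.inr rfl)
      · exact wok12
      · exact wok13
    · push_neg at h14
      rcases Nat.even_or_odd k with he | ho
      · obtain ⟨m, hm⟩ := he
        have hj : k = 2 * (m - 1) + 2 := by omega
        rw [hj]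
        exact wok_fold (m - 1) (ih (m - 1) (by omega) (by omega) (by omega)) 2 (Or.inl rfl)
      · obtain ⟨m, hm⟩ := ho
        have hj : k = 2 * (m - 1) + 3 := by omega
        rw [hj]
        exact wok_fold (m - 1) (ih (m - 1) (by omega) (by omega) (by omega)) 3 (Or.inr rfl)

lemma exists_dok (k : ℕ) (hk : 1 ≤ k) :
    ∃ l : List ℤ, Dok l ∧ ((ndCF l).2 = 2 ^ k ∨ (ndCF l).2 = -(2 ^ k)) := by
  by_cases h1 : k = 1
  · subst h1
    refine ⟨[-2], ?_, Or.inr ?_⟩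
    · exact ⟨trivial, by norm_num, Or.inr (Or.inr ⟨rfl, by norm_num [valCF]⟩)⟩
    · norm_num [ndCF]
  by_cases h5 : k = 5
  · subst h5
    refine ⟨[2, 8, -2], ?_, Or.inr ?_⟩
    · refine ⟨⟨⟨trivial, by norm_num, Or.inr (Or.inr ⟨rfl, by norm_num [valCF]⟩)⟩,
        by norm_num, Or.inl (by norm_num)⟩, by norm_num, Or.inr (Or.inl ⟨rfl, ?_⟩)⟩
      norm_num [valCF]
    · norm_num [ndCF]
  · obtain ⟨l, hS, hd⟩ := wok_all k (by omega) h5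
    exact ⟨l, sok_dok l hS, hd⟩

lemma odd_num (l : List ℤ) (hd2 : (2:ℤ) ∣ (ndCF l).2) : Odd (ndCF l).1 := by
  rw [← Int.not_even_iff_odd]
  intro he
  have hnd := ndCF_eq l
  have h1 : (ndCF l).1 = (Fm l).b := by rw [hnd]
  have h2 : (ndCF l).2 = (Fm l).d := by rw [hnd]
  obtain ⟨m, hm⟩ := he
  have hb : (2:ℤ) ∣ (Fm l).b := ⟨m, by omega⟩
  have hd : (2:ℤ) ∣ (Fm l).d := by rw [← h2]; exact hd2
  have hdvd : (2:ℤ) ∣ (Fm l).a * (Fm l).d - (Fm l).b * (Fm l).c :=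
    dvd_sub (hd.mul_left _) (hb.mul_right _)
  rw [det_Fm] at hdvd
  rcases neg_one_pow_eq_or ℤ l.length with hs | hs <;> rw [hs] at hdvd <;> omega

lemma goodR_conclusion (x : ℝ) (h : GoodR x) :
    ((x : ℝ) : ℂ) ∈ Fdom ∧
    ∀ n : ℕ, gaussT^[n] ((x : ℝ) : ℂ) ≠ 0 →
      ‖nearestGaussian (gaussT^[n] ((x : ℝ) : ℂ))⁻¹‖ ≤ 8 := by
  obtain ⟨⟨h1, h2⟩, horb⟩ := h
  refine ⟨?_, horb⟩
  show nearestGaussian _ = 0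
  rw [ng_real, floor_zero_of_bounds h1 h2]
  simp

theorem stmt11 (k : ℕ) (hk : 1 ≤ k) :
    ∃ a : ℤ, a ≠ 0 ∧ Odd a ∧
      ((a : ℂ) / ((2 : ℂ) ^ k)) ∈ Fdom ∧
      ∀ n : ℕ, gaussT^[n] ((a : ℂ) / ((2 : ℂ) ^ k)) ≠ 0 →
        ‖nearestGaussian (gaussT^[n] ((a : ℂ) / ((2 : ℂ) ^ k)))⁻¹‖ ≤ 8 := by
  obtain ⟨l, hD, hd⟩ := exists_dok k hk
  obtain ⟨hG, hval, hdne⟩ := dok_good l hD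
  set p := (ndCF l).1 with hp
  set d := (ndCF l).2 with hdd
  have hdvd2 : (2:ℤ) ∣ d := by
    rcases hd with h | h <;> rw [h]
    · exact dvd_pow_self 2 (by omega)
    · exact (dvd_pow_self 2 (by omega : k ≠ 0)).neg_right
  have hodd : Odd p := odd_num l hdvd2
  have hpne : p ≠ 0 := by
    intro h0
    rw [h0] at hodd
    simp at hodd
  have h2k : ((2:ℂ) ^ k) ≠ 0 := pow_ne_zero k (by norm_num)
  have hdc : ((d:ℤ):ℂ) ≠ 0 := by exact_mod_cast hdne
  obtain ⟨hFdom, horb⟩ := goodR_conclusion (valCF l) hG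
  rcases hd with h | h
  · have hcast : ((p : ℤ) : ℂ) / ((2:ℂ) ^ k) = ((valCF l : ℝ) : ℂ) := by
      rw [hval, h]
      push_cast
      ring
    refine ⟨p, hpne, hodd, ?_, ?_⟩
    · rw [hcast]; exact hFdom
    · rw [hcast]; exact horb
  · have hcast : (((-p) : ℤ) : ℂ) / ((2:ℂ) ^ k) = ((valCF l : ℝ) : ℂ) := by
      rw [hval]
      rw [h] at hdc ⊢
      push_cast at hdc ⊢
      field_simp
    refine ⟨-p, by simpa using hpne, by simpa using hodd.neg, ?_, ?_⟩
    · rw [hcast]; exact hFdom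
    · rw [hcast]; exact horb
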